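/- For each choice of sign σ ∈ {+, −}: |b − (c^{3/4}/√2) · |m^σ|^{1/4}| ≤ (c²/(2√2))(M' + (c/4) M''), where b = √a. -/

import Mathlib

open intervalIntegral Real

lemma semicircle_int (c : ℝ) (hc : 0 < c) :
    ∫ x in (-c)..c, Real.sqrt (c ^ 2 - x ^ 2) = Real.pi * c ^ 2 / 2 := by
  have h : ∀ x : ℝ, Real.sqrt (c ^ 2 - x ^ 2) = c * Real.sqrt (1 - (x / c) ^ 2) := by
    intro x
    rw [← Real.sqrt_sq hc.le, ← Real.sqrt_mul (sq_nonneg c)]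
    congr 1
    field_simp
    rw [Real.sq_sqrt (sq_nonneg c)]
  simp_rw [h]
  rw [intervalIntegral.integral_const_mul,
    intervalIntegral.integral_comp_div (fun y => Real.sqrt (1 - y ^ 2)) hc.ne']
  rw [neg_div, div_self hc.ne', integral_sqrt_one_sub_sq]
  simp [smul_eq_mul]
  ring

lemma odd_int (c : ℝ) :
    ∫ x in (-c)..c, x * Real.sqrt (c ^ 2 - x ^ 2) = 0 := by
  have h := intervalIntegral.integral_comp_neg (fun x => x * Real.sqrt (c ^ 2 - x ^ 2)) (a := -c) (b := c)
  simp only [neg_neg] at h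
  have h2 : ∀ x : ℝ, (-x) * Real.sqrt (c ^ 2 - (-x) ^ 2) = -(x * Real.sqrt (c ^ 2 - x ^ 2)) := by
    intro x; rw [neg_sq]; ring
  simp_rw [h2, intervalIntegral.integral_neg] at h
  linarith

lemma key_est (c : ℝ) (hc : 0 < c) (V : ℝ → ℝ)
    (hVc : ContinuousOn V (Set.Icc (-c) c))
    (hVnn : ∀ x ∈ Set.Icc (-c) c, 0 ≤ V x)
    (M' W s : ℝ) (hW0 : 0 ≤ W) (hM'0 : 0 ≤ M')
    (hbound : ∀ x ∈ Set.Icc (-c) c, |V x - W| ≤ M' * (c - s * x))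
    (a : ℝ)
    (ha : a = (1 / Real.pi) * ∫ x in (-c)..c, Real.sqrt (c ^ 2 - x ^ 2) * (1 + V x)) :
    |Real.sqrt a - c / Real.sqrt 2 * Real.sqrt (1 + W)| ≤ c ^ 2 / (2 * Real.sqrt 2) * M' := by
  have hcc : -c ≤ c := by linarith
  have huIcc : Set.uIcc (-c) c = Set.Icc (-c) c := Set.uIcc_of_le hcc
  have hrcont : Continuous fun x : ℝ => Real.sqrt (c ^ 2 - x ^ 2) :=
    (continuous_const.sub (continuous_pow 2)).sqrt
  have hintr : IntervalIntegrable (fun x => Real.sqrt (c ^ 2 - x ^ 2)) MeasureTheory.volume (-c) c :=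
    hrcont.intervalIntegrable _ _
  have hintv : IntervalIntegrable (fun x => Real.sqrt (c ^ 2 - x ^ 2) * (1 + V x)) MeasureTheory.volume (-c) c := by
    apply ContinuousOn.intervalIntegrable
    rw [huIcc]
    exact hrcont.continuousOn.mul (continuousOn_const.add hVc)
  have hintJ : IntervalIntegrable (fun x => Real.sqrt (c ^ 2 - x ^ 2) * (V x - W)) MeasureTheory.volume (-c) c := by
    apply ContinuousOn.intervalIntegrable
    rw [huIcc]
    exact hrcont.continuousOn.mul (hVc.sub continuousOn_const)
  have hintg : IntervalIntegrable (fun x => Real.sqrt (c ^ 2 - x ^ 2) * (M' * (c - s * x))) MeasureTheory.volume (-c) c :=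
    (hrcont.mul (continuous_const.mul (continuous_const.sub (continuous_const.mul continuous_id)))).intervalIntegrable _ _
  have I0 := semicircle_int c hc
  have I1 := odd_int c
  set J := ∫ x in (-c)..c, Real.sqrt (c ^ 2 - x ^ 2) * (V x - W) with hJ
  -- value of the full integral
  have hv_int : ∫ x in (-c)..c, Real.sqrt (c ^ 2 - x ^ 2) * (1 + V x)
      = (1 + W) * (Real.pi * c ^ 2 / 2) + J := by
    have hsplit : (fun x => Real.sqrt (c ^ 2 - x ^ 2) * (1 + V x))
        = fun x => (1 + W) * Real.sqrt (c ^ 2 - x ^ 2) + Real.sqrt (c ^ 2 - x ^ 2) * (V x - W) := by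
      funext x; ring
    rw [hsplit, intervalIntegral.integral_add (hintr.const_mul _) hintJ,
      intervalIntegral.integral_const_mul, I0]
  have hpi := Real.pi_pos
  have haJ : a = (1 + W) * c ^ 2 / 2 + J / Real.pi := by
    rw [ha, hv_int]; field_simp
  -- bound on J
  have hJb : |J| ≤ M' * (Real.pi * c ^ 3 / 2) := by
    have h1 : |J| ≤ ∫ x in (-c)..c, |Real.sqrt (c ^ 2 - x ^ 2)| * |V x - W| := by
      simpa [Real.norm_eq_abs, abs_mul] using
        intervalIntegral.norm_integral_le_integral_norm (f := fun x => Real.sqrt (c ^ 2 - x ^ 2) * (V x - W)) (μ := MeasureTheory.volume) hcc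
    have h2 : (∫ x in (-c)..c, |Real.sqrt (c ^ 2 - x ^ 2)| * |V x - W|)
        ≤ ∫ x in (-c)..c, Real.sqrt (c ^ 2 - x ^ 2) * (M' * (c - s * x)) := by
      have habs : IntervalIntegrable (fun x => |Real.sqrt (c ^ 2 - x ^ 2)| * |V x - W|) MeasureTheory.volume (-c) c := by
        have := hintJ.abs
        simpa [abs_mul] using this
      apply intervalIntegral.integral_mono_on hcc habs hintg
      intro x hx
      rw [abs_of_nonneg (Real.sqrt_nonneg _)]
      exact mul_le_mul_of_nonneg_left (hbound x hx) (Real.sqrt_nonneg _)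
    have h3 : (∫ x in (-c)..c, Real.sqrt (c ^ 2 - x ^ 2) * (M' * (c - s * x)))
        = M' * (Real.pi * c ^ 3 / 2) := by
      have hsplit : (fun x => Real.sqrt (c ^ 2 - x ^ 2) * (M' * (c - s * x)))
          = fun x => (M' * c) * Real.sqrt (c ^ 2 - x ^ 2) - (M' * s) * (x * Real.sqrt (c ^ 2 - x ^ 2)) := by
        funext x; ring
      have hi1 : IntervalIntegrable (fun x => M' * c * Real.sqrt (c ^ 2 - x ^ 2)) MeasureTheory.volume (-c) c := hintr.const_mul _
      have hi2 : IntervalIntegrable (fun x => M' * s * (x * Real.sqrt (c ^ 2 - x ^ 2))) MeasureTheory.volume (-c) c :=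
        ((continuous_id'.mul hrcont).intervalIntegrable _ _).const_mul _
      rw [hsplit, intervalIntegral.integral_sub hi1 hi2,
        intervalIntegral.integral_const_mul, intervalIntegral.integral_const_mul, I0, I1]
      ring
    linarith
  have haub : |a - (1 + W) * c ^ 2 / 2| ≤ M' * c ^ 3 / 2 := by
    have h4 : a - (1 + W) * c ^ 2 / 2 = J / Real.pi := by rw [haJ]; ring
    rw [h4, abs_div, abs_of_pos hpi, div_le_iff₀ hpi]
    linarith
  -- a ≥ c²/2
  have hage : c ^ 2 / 2 ≤ a := by
    have hmono : (∫ x in (-c)..c, Real.sqrt (c ^ 2 - x ^ 2))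
        ≤ ∫ x in (-c)..c, Real.sqrt (c ^ 2 - x ^ 2) * (1 + V x) := by
      apply intervalIntegral.integral_mono_on hcc hintr hintv
      intro x hx
      nlinarith [Real.sqrt_nonneg (c ^ 2 - x ^ 2), hVnn x hx]
    rw [ha]
    rw [I0] at hmono
    rw [show c ^ 2 / 2 = (1 / Real.pi) * (Real.pi * c ^ 2 / 2) from by field_simp]
    apply mul_le_mul_of_nonneg_left hmono (by positivity)
  have ha0 : 0 ≤ a := le_trans (by positivity) hage
  have h2s : Real.sqrt 2 * Real.sqrt 2 = 2 := Real.mul_self_sqrt (by norm_num)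
  have hs2pos : (0:ℝ) < Real.sqrt 2 := by positivity
  set u := c / Real.sqrt 2 * Real.sqrt (1 + W) with hu
  have hu2 : u ^ 2 = (1 + W) * c ^ 2 / 2 := by
    rw [hu, mul_pow, div_pow, Real.sq_sqrt (by linarith : (0:ℝ) ≤ 1 + W),
      show Real.sqrt 2 ^ 2 = 2 from by rw [sq, h2s]]
    ring
  have hu_ge : c / Real.sqrt 2 ≤ u := by
    have h1 : (1:ℝ) ≤ Real.sqrt (1 + W) := by
      have := Real.sqrt_le_sqrt (show (1:ℝ) ≤ 1 + W by linarith)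
      rwa [Real.sqrt_one] at this
    calc c / Real.sqrt 2 = c / Real.sqrt 2 * 1 := by ring
    _ ≤ u := by rw [hu]; exact mul_le_mul_of_nonneg_left h1 (by positivity)
  have hsa : c / Real.sqrt 2 ≤ Real.sqrt a := by
    have h1 : Real.sqrt (c ^ 2 / 2) = c / Real.sqrt 2 := by
      rw [show c ^ 2 / 2 = (c / Real.sqrt 2) ^ 2 from by
        rw [div_pow, show Real.sqrt 2 ^ 2 = 2 from by rw [sq, h2s]],
        Real.sqrt_sq (by positivity)]
    rw [← h1]
    exact Real.sqrt_le_sqrt hage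
  have hprod : (Real.sqrt a - u) * (Real.sqrt a + u) = a - u ^ 2 := by
    have hsq : Real.sqrt a ^ 2 = a := Real.sq_sqrt ha0
    linear_combination hsq
  have hden : c * Real.sqrt 2 ≤ Real.sqrt a + u := by
    have : c * Real.sqrt 2 = c / Real.sqrt 2 + c / Real.sqrt 2 := by
      rw [← add_div, eq_div_iff hs2pos.ne']
      linear_combination c * h2s
    linarith
  have hsum0 : 0 ≤ Real.sqrt a + u := le_trans (by positivity) hden
  have hmain : |Real.sqrt a - u| * (c * Real.sqrt 2) ≤ M' * c ^ 3 / 2 := by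
    calc |Real.sqrt a - u| * (c * Real.sqrt 2)
        ≤ |Real.sqrt a - u| * (Real.sqrt a + u) :=
          mul_le_mul_of_nonneg_left hden (abs_nonneg _)
      _ = |(Real.sqrt a - u) * (Real.sqrt a + u)| := by
          rw [abs_mul, abs_of_nonneg hsum0]
      _ = |a - u ^ 2| := by rw [hprod]
      _ ≤ M' * c ^ 3 / 2 := by rw [hu2]; exact haub
  have hc2 : (0:ℝ) < c * Real.sqrt 2 := by positivity
  rw [← mul_le_mul_iff_of_pos_right hc2]
  calc |Real.sqrt a - u| * (c * Real.sqrt 2) ≤ M' * c ^ 3 / 2 := hmain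
    _ = c ^ 2 / (2 * Real.sqrt 2) * M' * (c * Real.sqrt 2) := by
        field_simp
theorem stmt_11
    (c : ℝ) (hc : 0 < c)
    (V V' V'' : ℝ → ℝ)
    (hV1 : ∀ x ∈ Set.Icc (-c) c, HasDerivAt V (V' x) x)
    (hV2 : ∀ x ∈ Set.Icc (-c) c, HasDerivAt V' (V'' x) x)
    (hV2c : ContinuousOn V'' (Set.Icc (-c) c))
    (hVnn : ∀ x ∈ Set.Icc (-c) c, 0 ≤ V x)
    (r v : ℝ → ℝ)
    (hr : ∀ x, r x = Real.sqrt (c ^ 2 - x ^ 2))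
    (hv : ∀ x, v x = r x * (1 + V x))
    (M M' M'' : ℝ)
    (hM : IsLUB (V '' Set.Icc (-c) c) M)
    (hM' : IsLUB ((fun x => |V' x|) '' Set.Icc (-c) c) M')
    (hM'' : IsLUB ((fun x => |V'' x|) '' Set.Icc (-c) c) M'')
    (a : ℝ) (ha : a = (1 / Real.pi) * ∫ x in (-c)..c, v x)
    (mp mm : ℝ)
    (hmp : mp = c * (1 + V c) ^ 2)
    (hmm : mm = -(c * (1 + V (-c)) ^ 2))
    :
    |Real.sqrt a - c ^ ((3 : ℝ) / 4) / Real.sqrt 2 * |mp| ^ ((1 : ℝ) / 4)| ≤ c ^ 2 / (2 * Real.sqrt 2) * (M' + c / 4 * M'') ∧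
    |Real.sqrt a - c ^ ((3 : ℝ) / 4) / Real.sqrt 2 * |mm| ^ ((1 : ℝ) / 4)| ≤ c ^ 2 / (2 * Real.sqrt 2) * (M' + c / 4 * M'') := by
  have hcc : -c ≤ c := by linarith
  have hcmem : c ∈ Set.Icc (-c) c := ⟨hcc, le_refl c⟩
  have hncmem : -c ∈ Set.Icc (-c) c := ⟨le_refl _, hcc⟩
  have ha' : a = (1 / Real.pi) * ∫ x in (-c)..c, Real.sqrt (c ^ 2 - x ^ 2) * (1 + V x) := by
    rw [ha]; congr 1; apply intervalIntegral.integral_congr; intro x _; rw [hv, hr]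
  have hVc : ContinuousOn V (Set.Icc (-c) c) := fun x hx =>
    ((hV1 x hx).continuousAt).continuousWithinAt
  -- M' and M'' nonneg
  have hM'0 : 0 ≤ M' := le_trans (abs_nonneg (V' c)) (hM'.1 ⟨c, hcmem, rfl⟩)
  have hM''0 : 0 ≤ M'' := le_trans (abs_nonneg (V'' c)) (hM''.1 ⟨c, hcmem, rfl⟩)
  -- mean value estimates
  have hmvt : ∀ x ∈ Set.Icc (-c) c, ∀ y ∈ Set.Icc (-c) c, |V y - V x| ≤ M' * |y - x| := by
    intro x hx y hy
    have := (convex_Icc (-c) c).norm_image_sub_le_of_norm_hasDerivWithin_le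
      (fun z hz => (hV1 z hz).hasDerivWithinAt)
      (fun z hz => by rw [Real.norm_eq_abs]; exact hM'.1 ⟨z, hz, rfl⟩) hx hy
    simpa [Real.norm_eq_abs] using this
  have hbp : ∀ x ∈ Set.Icc (-c) c, |V x - V c| ≤ M' * (c - 1 * x) := by
    intro x hx
    have h := hmvt c hcmem x hx
    rwa [show |x - c| = c - 1 * x from by rw [abs_of_nonpos (by linarith [hx.2])]; ring] at h
  have hbm : ∀ x ∈ Set.Icc (-c) c, |V x - V (-c)| ≤ M' * (c - (-1) * x) := by
    intro x hx
    have h := hmvt (-c) hncmem x hx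
    rwa [show |x - -c| = c - (-1) * x from by rw [abs_of_nonneg (by linarith [hx.1])]; ring] at h
  have hkp := key_est c hc V hVc hVnn M' (V c) 1 (hVnn c hcmem) hM'0 hbp a ha'
  have hkm := key_est c hc V hVc hVnn M' (V (-c)) (-1) (hVnn (-c) hncmem) hM'0 hbm a ha'
  -- rpow simplification
  have hrpow : ∀ W : ℝ, 0 ≤ W →
      c ^ ((3 : ℝ) / 4) / Real.sqrt 2 * (c * (1 + W) ^ 2) ^ ((1 : ℝ) / 4)
        = c / Real.sqrt 2 * Real.sqrt (1 + W) := by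
    intro W hW
    have h1W : (0:ℝ) ≤ 1 + W := by linarith
    rw [Real.mul_rpow hc.le (sq_nonneg _), ← Real.rpow_natCast (1 + W) 2,
      ← Real.rpow_mul h1W]
    norm_num
    rw [← Real.sqrt_eq_rpow]
    have hcc4 : c ^ ((3:ℝ) / 4) * c ^ ((1:ℝ) / 4) = c := by
      rw [← Real.rpow_add hc]; norm_num
    field_simp
    linear_combination hcc4
  -- slack term nonneg
  have hslack : c ^ 2 / (2 * Real.sqrt 2) * M' ≤ c ^ 2 / (2 * Real.sqrt 2) * (M' + c / 4 * M'') := by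
    have h1 : (0:ℝ) ≤ c ^ 2 / (2 * Real.sqrt 2) := by positivity
    have h2 : (0:ℝ) ≤ c / 4 * M'' := by positivity
    nlinarith
  constructor
  · have habs : |mp| = c * (1 + V c) ^ 2 := by
      rw [hmp, abs_of_nonneg (by positivity)]
    rw [habs, hrpow (V c) (hVnn c hcmem)]
    exact le_trans hkp hslack
  · have habs : |mm| = c * (1 + V (-c)) ^ 2 := by
      rw [hmm, abs_neg, abs_of_nonneg (by positivity)]
    rw [habs, hrpow (V (-c)) (hVnn (-c) hncmem)]
    exact le_trans hkm hslack
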